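/- Let f : ℝ² → ℝ be smooth with f_30 = 0 and f_40 = 0, where f_ij = ∂^{i+j}f/∂x^i∂y^j (0,0). Let a^f(x,y,p) = f_xx + 2f_xy·p + f_yy·p² and I(x,y,p) = (a^f)_x + p·(a^f)_y. Then the gradients at the origin are ∇a^f(0,0,0) = (0, f_21, 2f_11) and ∇I(0,0,0) = (0, f_31, 3f_21). Consequently these two gradients are linearly dependent if and only if 3f_21² − 2f_31·f_11 = 0; in particular, if f_11 ≠ 0 and 3f_21² − 2f_31·f_11 ≠ 0, the surfaces {a^f = 0} and {I = 0} are both smooth at the origin and intersect transversely there (so the flecnodal curve is smooth at the corresponding biflecnode). -/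

import Mathlib

noncomputable section

/-- Partial derivative in the first variable of a function on `ℝ × ℝ`. -/
def pdx (f : ℝ × ℝ → ℝ) (q : ℝ × ℝ) : ℝ := deriv (fun t => f (t, q.2)) q.1

/-- Partial derivative in the second variable of a function on `ℝ × ℝ`. -/
def pdy (f : ℝ × ℝ → ℝ) (q : ℝ × ℝ) : ℝ := deriv (fun t => f (q.1, t)) q.2

lemma hasDerivAt_sliceX (f : ℝ × ℝ → ℝ) (hf : Differentiable ℝ f) (x c : ℝ) :
    HasDerivAt (fun t => f (t, c)) (pdx f (x, c)) x := by
  have h : DifferentiableAt ℝ (fun t : ℝ => f (t, c)) x :=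
    (hf (x, c)).comp x ((differentiableAt_id).prodMk (differentiableAt_const c))
  exact h.hasDerivAt

lemma hasDerivAt_sliceY (f : ℝ × ℝ → ℝ) (hf : Differentiable ℝ f) (c y : ℝ) :
    HasDerivAt (fun t => f (c, t)) (pdy f (c, y)) y := by
  have h : DifferentiableAt ℝ (fun t : ℝ => f (c, t)) y :=
    (hf (c, y)).comp y ((differentiableAt_const c).prodMk differentiableAt_id)
  exact h.hasDerivAt

lemma pdx_eq_fderiv (f : ℝ × ℝ → ℝ) (hf : Differentiable ℝ f) (q : ℝ × ℝ) :
    pdx f q = fderiv ℝ f q ((1 : ℝ), (0 : ℝ)) := by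
  have h1 : HasDerivAt (fun t : ℝ => (t, q.2)) (((1 : ℝ), (0 : ℝ)) : ℝ × ℝ) q.1 :=
    (hasDerivAt_id q.1).prodMk (hasDerivAt_const q.1 q.2)
  have h2 : HasDerivAt (fun t => f (t, q.2)) (fderiv ℝ f (q.1, q.2) ((1:ℝ),(0:ℝ))) q.1 :=
    (hf (q.1, q.2)).hasFDerivAt.comp_hasDerivAt q.1 h1
  simpa [pdx] using h2.deriv

lemma pdy_eq_fderiv (f : ℝ × ℝ → ℝ) (hf : Differentiable ℝ f) (q : ℝ × ℝ) :
    pdy f q = fderiv ℝ f q ((0 : ℝ), (1 : ℝ)) := by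
  have h1 : HasDerivAt (fun t : ℝ => (q.1, t)) (((0 : ℝ), (1 : ℝ)) : ℝ × ℝ) q.2 :=
    (hasDerivAt_const q.2 q.1).prodMk (hasDerivAt_id q.2)
  have h2 : HasDerivAt (fun t => f (q.1, t)) (fderiv ℝ f (q.1, q.2) ((0:ℝ),(1:ℝ))) q.2 :=
    (hf (q.1, q.2)).hasFDerivAt.comp_hasDerivAt q.2 h1
  simpa [pdy] using h2.deriv

lemma fderiv_apply_smooth (f : ℝ × ℝ → ℝ) (hf : ContDiff ℝ (⊤ : ℕ∞) f) (v : ℝ × ℝ) :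
    ContDiff ℝ (⊤ : ℕ∞) (fun q => fderiv ℝ f q v) :=
  ((ContinuousLinearMap.apply ℝ ℝ v).contDiff).comp (hf.fderiv_right (m := (⊤ : ℕ∞)) (by exact_mod_cast le_top))

lemma contDiff_pdx (f : ℝ × ℝ → ℝ) (hf : ContDiff ℝ (⊤ : ℕ∞) f) :
    ContDiff ℝ (⊤ : ℕ∞) (pdx f) := by
  have : pdx f = fun q => fderiv ℝ f q ((1:ℝ),(0:ℝ)) :=
    funext (pdx_eq_fderiv f (hf.differentiable (by simp)))
  rw [this]; exact fderiv_apply_smooth f hf _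

lemma contDiff_pdy (f : ℝ × ℝ → ℝ) (hf : ContDiff ℝ (⊤ : ℕ∞) f) :
    ContDiff ℝ (⊤ : ℕ∞) (pdy f) := by
  have : pdy f = fun q => fderiv ℝ f q ((0:ℝ),(1:ℝ)) :=
    funext (pdy_eq_fderiv f (hf.differentiable (by simp)))
  rw [this]; exact fderiv_apply_smooth f hf _

lemma schwarz (f : ℝ × ℝ → ℝ) (hf : ContDiff ℝ (⊤ : ℕ∞) f) (q : ℝ × ℝ) :
    pdx (pdy f) q = pdy (pdx f) q := by
  have hsym : ∀ v w : ℝ × ℝ,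
      fderiv ℝ (fderiv ℝ f) q v w = fderiv ℝ (fderiv ℝ f) q w v := by
    intro v w
    have hd1 : Differentiable ℝ f := hf.differentiable (by simp)
    have hd2 : DifferentiableAt ℝ (fderiv ℝ f) q :=
      ((hf.fderiv_right (m := (⊤ : ℕ∞)) (by exact_mod_cast le_top)).differentiable
        (by simp)) q
    exact second_derivative_symmetric (x := q) (fun y => (hd1 y).hasFDerivAt)
      hd2.hasFDerivAt v w
  have key : ∀ v w : ℝ × ℝ, fderiv ℝ (fun p => fderiv ℝ f p v) q w
      = fderiv ℝ (fderiv ℝ f) q w v := by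
    intro v w
    have hd : DifferentiableAt ℝ (fderiv ℝ f) q :=
      ((hf.fderiv_right (m := (⊤ : ℕ∞)) (by exact_mod_cast le_top)).differentiable
        (by simp)) q
    have hcomp : HasFDerivAt (fun p => fderiv ℝ f p v)
        ((ContinuousLinearMap.apply ℝ ℝ v).comp (fderiv ℝ (fderiv ℝ f) q)) q :=
      (ContinuousLinearMap.apply ℝ ℝ v).hasFDerivAt.comp q hd.hasFDerivAt
    rw [hcomp.fderiv]; rfl
  have hd1 : Differentiable ℝ f := hf.differentiable (by simp)
  have hpy : pdy f = fun p => fderiv ℝ f p ((0:ℝ),(1:ℝ)) := funext (pdy_eq_fderiv f hd1)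
  have hpx : pdx f = fun p => fderiv ℝ f p ((1:ℝ),(0:ℝ)) := funext (pdx_eq_fderiv f hd1)
  have h1 : pdx (pdy f) q = fderiv ℝ (pdy f) q ((1:ℝ),(0:ℝ)) :=
    pdx_eq_fderiv _ ((contDiff_pdy f hf).differentiable (by simp)) q
  have h2 : pdy (pdx f) q = fderiv ℝ (pdx f) q ((0:ℝ),(1:ℝ)) :=
    pdy_eq_fderiv _ ((contDiff_pdx f hf).differentiable (by simp)) q
  rw [h1, h2, hpy, hpx, key, key, hsym]


lemma deriv_cubic (c0 c1 c2 c3 : ℝ) :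
    deriv (fun t : ℝ => c0 + c1 * t + c2 * t ^ 2 + c3 * t ^ 3) 0 = c1 := by
  have h1 : HasDerivAt (fun t : ℝ => t) 1 0 := hasDerivAt_id 0
  have h2 := hasDerivAt_pow 2 (0 : ℝ)
  have h3 := hasDerivAt_pow 3 (0 : ℝ)
  have h := (((hasDerivAt_const (0 : ℝ) c0).add (h1.const_mul c1)).add
    (h2.const_mul c2)).add (h3.const_mul c3)
  have := h.deriv
  simp at this; exact this

/-- Partial derivative in `x` of a function on `ℝ × ℝ × ℝ` (coordinates `(x, y, p)`). -/
def pDx (F : ℝ × ℝ × ℝ → ℝ) (q : ℝ × ℝ × ℝ) : ℝ := deriv (fun t => F (t, q.2.1, q.2.2)) q.1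

/-- Partial derivative in `y` of a function on `ℝ × ℝ × ℝ` (coordinates `(x, y, p)`). -/
def pDy (F : ℝ × ℝ × ℝ → ℝ) (q : ℝ × ℝ × ℝ) : ℝ := deriv (fun t => F (q.1, t, q.2.2)) q.2.1

/-- Partial derivative in `p` of a function on `ℝ × ℝ × ℝ` (coordinates `(x, y, p)`). -/
def pDp (F : ℝ × ℝ × ℝ → ℝ) (q : ℝ × ℝ × ℝ) : ℝ := deriv (fun t => F (q.1, q.2.1, t)) q.2.2

/-- The asymptotic IDE function `a^f(x,y,p) = f_xx + 2 f_xy p + f_yy p²`. -/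
def aIDE (f : ℝ × ℝ → ℝ) (q : ℝ × ℝ × ℝ) : ℝ :=
  pdx (pdx f) (q.1, q.2.1) + 2 * pdy (pdx f) (q.1, q.2.1) * q.2.2
    + pdy (pdy f) (q.1, q.2.1) * q.2.2 ^ 2

/-- The inflection function `I^F(x,y,p) = F_x + p·F_y`; its zero set is the flec-surface. -/
def inflFun (F : ℝ × ℝ × ℝ → ℝ) (q : ℝ × ℝ × ℝ) : ℝ := pDx F q + q.2.2 * pDy F q

/-- key gradient computation in the proof of Theorem 3: if
`f₃₀ = f₄₀ = 0`, then `∇a^f(0) = (0, f₂₁, 2f₁₁)` and `∇I(0) = (0, f₃₁, 3f₂₁)`; these are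
linearly dependent iff `3f₂₁² − 2f₃₁f₁₁ = 0`; in particular, if `f₁₁ ≠ 0` and
`3f₂₁² − 2f₃₁f₁₁ ≠ 0`, the surfaces `{a^f = 0}` and `{I = 0}` are smooth at the origin
(nonzero gradients) and intersect transversely there (independent gradients). -/
theorem biflecnode_gradients (f : ℝ × ℝ → ℝ) (hf : ContDiff ℝ (⊤ : ℕ∞) f)
    (h30 : pdx (pdx (pdx f)) (0, 0) = 0)
    (h40 : pdx (pdx (pdx (pdx f))) (0, 0) = 0) :
    (pDx (aIDE f) (0, 0, 0), pDy (aIDE f) (0, 0, 0), pDp (aIDE f) (0, 0, 0)) =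
      ((0 : ℝ), pdy (pdx (pdx f)) (0, 0), 2 * pdy (pdx f) (0, 0)) ∧
    (pDx (inflFun (aIDE f)) (0, 0, 0), pDy (inflFun (aIDE f)) (0, 0, 0),
        pDp (inflFun (aIDE f)) (0, 0, 0)) =
      ((0 : ℝ), pdy (pdx (pdx (pdx f))) (0, 0), 3 * pdy (pdx (pdx f)) (0, 0)) ∧
    ((∃ s t : ℝ, (s, t) ≠ ((0 : ℝ), (0 : ℝ)) ∧
        s • (((0 : ℝ), pdy (pdx (pdx f)) (0, 0), 2 * pdy (pdx f) (0, 0)) : ℝ × ℝ × ℝ)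
          + t • (((0 : ℝ), pdy (pdx (pdx (pdx f))) (0, 0),
              3 * pdy (pdx (pdx f)) (0, 0)) : ℝ × ℝ × ℝ) = 0) ↔
      3 * (pdy (pdx (pdx f)) (0, 0)) ^ 2
        - 2 * pdy (pdx (pdx (pdx f))) (0, 0) * pdy (pdx f) (0, 0) = 0) ∧
    (pdy (pdx f) (0, 0) ≠ 0 →
      3 * (pdy (pdx (pdx f)) (0, 0)) ^ 2
          - 2 * pdy (pdx (pdx (pdx f))) (0, 0) * pdy (pdx f) (0, 0) ≠ 0 →
      ((((0 : ℝ), pdy (pdx (pdx f)) (0, 0), 2 * pdy (pdx f) (0, 0)) : ℝ × ℝ × ℝ) ≠ 0 ∧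
        (((0 : ℝ), pdy (pdx (pdx (pdx f))) (0, 0),
            3 * pdy (pdx (pdx f)) (0, 0)) : ℝ × ℝ × ℝ) ≠ 0 ∧
        ¬ ∃ s t : ℝ, (s, t) ≠ ((0 : ℝ), (0 : ℝ)) ∧
          s • (((0 : ℝ), pdy (pdx (pdx f)) (0, 0), 2 * pdy (pdx f) (0, 0)) : ℝ × ℝ × ℝ)
            + t • (((0 : ℝ), pdy (pdx (pdx (pdx f))) (0, 0),
                3 * pdy (pdx (pdx f)) (0, 0)) : ℝ × ℝ × ℝ) = 0)) := by
  
  have hfx : ContDiff ℝ (⊤ : ℕ∞) (pdx f) := contDiff_pdx f hf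
  have hfy : ContDiff ℝ (⊤ : ℕ∞) (pdy f) := contDiff_pdy f hf
  set F20 := pdx (pdx f) with hF20def
  set F11 := pdy (pdx f) with hF11def
  set F02 := pdy (pdy f) with hF02def
  have hF20 : ContDiff ℝ (⊤ : ℕ∞) F20 := contDiff_pdx _ hfx
  have hF11 : ContDiff ℝ (⊤ : ℕ∞) F11 := contDiff_pdy _ hfx
  have hF02 : ContDiff ℝ (⊤ : ℕ∞) F02 := contDiff_pdy _ hfy
  have dF20 : Differentiable ℝ F20 := hF20.differentiable (by simp)
  have dF11 : Differentiable ℝ F11 := hF11.differentiable (by simp)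
  have dF02 : Differentiable ℝ F02 := hF02.differentiable (by simp)
  -- aIDE at p = 0
  have e0 : ∀ x y : ℝ, aIDE f (x, y, 0) = F20 (x, y) := by
    intro x y; simp [aIDE]; rfl
  -- gradient of aIDE
  have hAx : pDx (aIDE f) (0, 0, 0) = pdx F20 (0, 0) := by
    show deriv (fun s => aIDE f (s, 0, 0)) 0 = deriv (fun s => F20 (s, 0)) 0
    simp only [e0]
  have hAy : pDy (aIDE f) (0, 0, 0) = pdy F20 (0, 0) := by
    show deriv (fun s => aIDE f (0, s, 0)) 0 = deriv (fun s => F20 (0, s)) 0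
    simp only [e0]
  have hAp : pDp (aIDE f) (0, 0, 0) = 2 * F11 (0, 0) := by
    show deriv (fun t => aIDE f (0, 0, t)) 0 = 2 * F11 (0, 0)
    have e : (fun t : ℝ => aIDE f (0, 0, t))
        = fun t : ℝ => F20 (0, 0) + (2 * F11 (0, 0)) * t + F02 (0, 0) * t ^ 2
          + 0 * t ^ 3 := by
      funext t; simp only [aIDE]; ring
    rw [e, deriv_cubic]
  -- helper: polynomial formulas in p for the partials of aIDE
  have hXt : ∀ t : ℝ, pDx (aIDE f) (0, 0, t)
      = pdx F20 (0, 0) + (2 * pdx F11 (0, 0)) * t + pdx F02 (0, 0) * t ^ 2 := by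
    intro t
    show deriv (fun s => aIDE f (s, 0, t)) 0 = _
    have h1 := hasDerivAt_sliceX F20 dF20 0 0
    have h2 := hasDerivAt_sliceX F11 dF11 0 0
    have h3 := hasDerivAt_sliceX F02 dF02 0 0
    have h := (h1.add ((h2.const_mul 2).mul_const t)).add (h3.mul_const (t ^ 2))
    exact h.deriv
  have hYt : ∀ t : ℝ, pDy (aIDE f) (0, 0, t)
      = pdy F20 (0, 0) + (2 * pdy F11 (0, 0)) * t + pdy F02 (0, 0) * t ^ 2 := by
    intro t
    show deriv (fun s => aIDE f (0, s, t)) 0 = _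
    have h1 := hasDerivAt_sliceY F20 dF20 0 0
    have h2 := hasDerivAt_sliceY F11 dF11 0 0
    have h3 := hasDerivAt_sliceY F02 dF02 0 0
    have h := (h1.add ((h2.const_mul 2).mul_const t)).add (h3.mul_const (t ^ 2))
    exact h.deriv
  -- partials of aIDE at p = 0, general (x, y)
  have hAx0 : ∀ x y : ℝ, pDx (aIDE f) (x, y, 0) = pdx F20 (x, y) := by
    intro x y
    show deriv (fun s => aIDE f (s, y, 0)) x = deriv (fun s => F20 (s, y)) x
    simp only [e0]
  -- inflFun at p = 0
  have eI0 : ∀ x y : ℝ, inflFun (aIDE f) (x, y, 0) = pdx F20 (x, y) := by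
    intro x y
    show pDx (aIDE f) (x, y, 0) + 0 * pDy (aIDE f) (x, y, 0) = _
    rw [hAx0 x y]; ring
  have hIx : pDx (inflFun (aIDE f)) (0, 0, 0) = pdx (pdx F20) (0, 0) := by
    show deriv (fun s => inflFun (aIDE f) (s, 0, 0)) 0 = deriv (fun s => pdx F20 (s, 0)) 0
    simp only [eI0]
  have hIy : pDy (inflFun (aIDE f)) (0, 0, 0) = pdy (pdx F20) (0, 0) := by
    show deriv (fun s => inflFun (aIDE f) (0, s, 0)) 0 = deriv (fun s => pdx F20 (0, s)) 0
    simp only [eI0]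
  have hschwarz : pdx F11 (0, 0) = pdy F20 (0, 0) := schwarz (pdx f) hfx (0, 0)
  have hIp : pDp (inflFun (aIDE f)) (0, 0, 0) = 3 * pdy F20 (0, 0) := by
    show deriv (fun t => inflFun (aIDE f) (0, 0, t)) 0 = _
    have e : (fun t : ℝ => inflFun (aIDE f) (0, 0, t))
        = fun t : ℝ => pdx F20 (0, 0)
            + (2 * pdx F11 (0, 0) + pdy F20 (0, 0)) * t
            + (pdx F02 (0, 0) + 2 * pdy F11 (0, 0)) * t ^ 2
            + pdy F02 (0, 0) * t ^ 3 := by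
      funext t
      show pDx (aIDE f) (0, 0, t) + t * pDy (aIDE f) (0, 0, t) = _
      rw [hXt t, hYt t]; ring
    rw [e, deriv_cubic, hschwarz]; ring
  -- abbreviations
  set a := pdy F20 (0, 0) with ha
  set b := F11 (0, 0) with hb
  set c := pdy (pdx F20) (0, 0) with hc
  have hiff : (∃ s t : ℝ, (s, t) ≠ ((0 : ℝ), (0 : ℝ)) ∧
      s • (((0 : ℝ), a, 2 * b) : ℝ × ℝ × ℝ)
        + t • (((0 : ℝ), c, 3 * a) : ℝ × ℝ × ℝ) = 0) ↔
      3 * a ^ 2 - 2 * c * b = 0 := by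
    constructor
    · rintro ⟨s, t, hst, heq⟩
      rw [Prod.ext_iff, Prod.ext_iff] at heq
      simp only [Prod.smul_mk, Prod.mk_add_mk, smul_eq_mul, Prod.fst_add, Prod.snd_add,
        Prod.fst_zero, Prod.snd_zero] at heq
      obtain ⟨-, h2, h3⟩ := heq
      by_contra hdet
      have hs : s * (3 * a ^ 2 - 2 * c * b) = 0 := by linear_combination (3 * a) * h2 - c * h3
      have ht : t * (3 * a ^ 2 - 2 * c * b) = 0 := by linear_combination -(2 * b) * h2 + a * h3
      have hs0 : s = 0 := by rcases mul_eq_zero.1 hs with h | h; exact h; exact absurd h hdet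
      have ht0 : t = 0 := by rcases mul_eq_zero.1 ht with h | h; exact h; exact absurd h hdet
      exact hst (by rw [hs0, ht0])
    · intro hdet
      by_cases hac : a = 0 ∧ c = 0
      · refine ⟨0, 1, by simp, ?_⟩
        simp [hac.1, hac.2, Prod.ext_iff]
      · refine ⟨-c, a, ?_, ?_⟩
        · intro h
          rw [Prod.mk.injEq] at h
          exact hac ⟨h.2, by linarith [h.1]⟩
        · rw [Prod.ext_iff, Prod.ext_iff]
          simp only [Prod.smul_mk, Prod.mk_add_mk, smul_eq_mul, Prod.fst_add, Prod.snd_add,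
            Prod.fst_zero, Prod.snd_zero]
          refine ⟨by ring, by ring, by linarith [hdet]⟩
  refine ⟨?_, ?_, hiff, ?_⟩
  · rw [Prod.ext_iff, Prod.ext_iff]
    refine ⟨?_, hAy, hAp⟩
    rw [hAx]; exact h30
  · rw [Prod.ext_iff, Prod.ext_iff]
    refine ⟨?_, hIy, hIp⟩
    rw [hIx]; exact h40
  · intro hb0 hdet
    refine ⟨?_, ?_, fun hEx => hdet (hiff.mp hEx)⟩
    · intro h
      rw [Prod.ext_iff, Prod.ext_iff] at h
      simp only [Prod.fst_zero, Prod.snd_zero] at h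
      exact hb0 (by linarith [h.2.2])
    · intro h
      rw [Prod.ext_iff, Prod.ext_iff] at h
      simp only [Prod.fst_zero, Prod.snd_zero] at h
      apply hdet
      have ha0 : a = 0 := by linarith [h.2.2]
      rw [ha0, h.2.1]; ring
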